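/- Let R be a regular local ring with regular system of parameters x, y, z, and let q, m, n be positive integers with q < m < qn. Then (x − z^q, z^m) ∩ (y, x^n) = (y(x − z^q), y z^m, x^n). -/

import Mathlib

open RingTheory.Sequence Submodule Pointwise

section aux
variable {R M : Type*} [CommRing R] [AddCommGroup M] [Module R M]

lemma mem_rsmul_top_iff (a : R) (m : M) :
    m ∈ a • (⊤ : Submodule R M) ↔ ∃ n : M, a • n = m := by
  rw [← SetLike.mem_coe, Submodule.coe_pointwise_smul, Set.mem_smul_set]
  simp

lemma aux_pow {a b : R} (ha : IsSMulRegular M a)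
    (hb : ∀ m : M, b • m ∈ a • (⊤ : Submodule R M) → m ∈ a • (⊤ : Submodule R M)) :
    ∀ k : ℕ, ∀ m : M, b • m ∈ a ^ k • (⊤ : Submodule R M) → m ∈ a ^ k • (⊤ : Submodule R M)
  | 0, m, _ => by simpa using Submodule.mem_top
  | (k+1), m, h => by
    obtain ⟨w, hw⟩ := (mem_rsmul_top_iff _ _).mp h
    have h1 : b • m ∈ a • (⊤ : Submodule R M) := by
      rw [mem_rsmul_top_iff]
      exact ⟨a ^ k • w, by rw [← hw, ← mul_smul, ← pow_succ']⟩
    obtain ⟨m1, rfl⟩ := (mem_rsmul_top_iff _ _).mp (hb m h1)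
    have h2 : a • (b • m1) = a • (a ^ k • w) := by
      rw [smul_comm, ← hw, pow_succ', mul_smul]
    have h3 : b • m1 ∈ a ^ k • (⊤ : Submodule R M) :=
      (mem_rsmul_top_iff _ _).mpr ⟨w, (ha h2).symm⟩
    obtain ⟨w1, hw1⟩ := (mem_rsmul_top_iff _ _).mp (aux_pow ha hb k m1 h3)
    exact (mem_rsmul_top_iff _ _).mpr ⟨w1, by rw [← hw1, ← mul_smul, ← pow_succ']⟩

end aux

theorem stmt12 (R : Type) [CommRing R] [IsNoetherianRing R] [IsLocalRing R]
    (x y z : R) (hreg : RingTheory.Sequence.IsRegular R [x, y, z])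
    (hmax : Ideal.span {x, y, z} = IsLocalRing.maximalIdeal R)
    (q m n : ℕ) (hq : 0 < q) (hn : 0 < n) (hqm : q < m) (hmqn : m < q * n) :
    Ideal.span {x - z ^ q, z ^ m} ⊓ Ideal.span {y, x ^ n} =
      Ideal.span {y * (x - z ^ q), y * z ^ m, x ^ n} := by
  -- membership of the parameters in the maximal ideal
  have hmem : ∀ r ∈ [x, y, z], r ∈ IsLocalRing.maximalIdeal R := by
    intro r hr
    rw [← hmax]
    apply Ideal.subset_span
    simpa using hr
  have hxm : x ∈ IsLocalRing.maximalIdeal R := hmem x (by simp)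
  have hym : y ∈ IsLocalRing.maximalIdeal R := hmem y (by simp)
  have hzm : z ∈ IsLocalRing.maximalIdeal R := hmem z (by simp)
  -- Step 1: [z, x, y] is weakly regular
  have hperm1 : ([x, y, z] : List R).Perm [z, x, y] :=
    List.perm_append_comm (l₁ := [x, y]) (l₂ := [z])
  have hw1 : IsWeaklyRegular R [z, x, y] :=
    IsLocalRing.isWeaklyRegular_of_perm_of_subset_maximalIdeal
      hreg.toIsWeaklyRegular hperm1 hmem
  -- Step 2: replace x by x - z^q
  have hw2 : IsWeaklyRegular R [z, x - z ^ q, y] := by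
    rw [isWeaklyRegular_cons_iff] at hw1 ⊢
    refine ⟨hw1.1, ?_⟩
    have hz0 : ∀ w : QuotSMulTop z R, (z ^ q) • w = 0 := by
      intro w
      obtain ⟨u, rfl⟩ := Submodule.mkQ_surjective _ w
      rw [← map_smul, Submodule.mkQ_apply, Submodule.Quotient.mk_eq_zero]
      obtain ⟨q', rfl⟩ := Nat.exists_eq_succ_of_ne_zero hq.ne'
      rw [pow_succ', mul_smul]
      exact Submodule.smul_mem_pointwise_smul _ _ _ Submodule.mem_top
    have hcongr := AddEquiv.isWeaklyRegular_congr
      (e := AddEquiv.refl (QuotSMulTop z R)) (as := [x, y]) (bs := [x - z ^ q, y])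
      (List.Forall₂.cons
        (fun w => by
          show x • w = (x - z ^ q) • w
          rw [sub_smul, hz0, sub_zero])
        (List.Forall₂.cons (fun w => rfl) List.Forall₂.nil))
    exact hcongr.mp hw1.2
  -- Step 3: permute to [x - z^q, z, y]
  have hmem2 : ∀ r ∈ [z, x - z ^ q, y], r ∈ IsLocalRing.maximalIdeal R := by
    intro r hr
    simp only [List.mem_cons, List.not_mem_nil, or_false] at hr
    rcases hr with rfl | rfl | rfl
    · exact hzm
    · exact sub_mem hxm (Ideal.pow_mem_of_mem _ hzm q hq)
    · exact hym
  have hw3 : IsWeaklyRegular R [x - z ^ q, z, y] :=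
    IsLocalRing.isWeaklyRegular_of_perm_of_subset_maximalIdeal hw2
      (List.Perm.swap (x - z ^ q) z [y]) hmem2
  -- Step 4: raise z to the m-th power
  have hw4 : IsWeaklyRegular R [x - z ^ q, z ^ m, y] := by
    rw [isWeaklyRegular_cons_iff] at hw3 ⊢
    refine ⟨hw3.1, ?_⟩
    rw [isWeaklyRegular_cons_iff] at hw3 ⊢
    obtain ⟨_, hzreg, hyreg⟩ := hw3
    refine ⟨hzreg.pow m, ?_⟩
    rw [isWeaklyRegular_singleton_iff] at hyreg ⊢
    rw [isSMulRegular_quotient_iff_mem_of_smul_mem] at hyreg ⊢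
    exact aux_pow hzreg hyreg m
  -- Step 5: extract that y is regular modulo (x - z^q, z^m)
  set I : Ideal R := Ideal.span {x - z ^ q, z ^ m} with hI
  have hIeq : (Ideal.ofList [x - z ^ q, z ^ m] • ⊤ : Submodule R R) = I := by
    have h1 : Ideal.ofList [x - z ^ q, z ^ m] = I := by
      rw [Ideal.ofList_cons, Ideal.ofList_singleton, hI, Ideal.span_insert]
    rw [h1, smul_eq_mul, Ideal.mul_top]
  have hyI : ∀ c : R, y * c ∈ I → c ∈ I := by
    have := ((isWeaklyRegular_append_iff R [x - z ^ q, z ^ m] [y]).mp hw4).2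
    rw [isWeaklyRegular_singleton_iff, hIeq,
      isSMulRegular_quotient_iff_mem_of_smul_mem] at this
    intro c hc
    exact this c (by rwa [smul_eq_mul])
  -- key membership: x^n ∈ I
  have hgen1 : x - z ^ q ∈ I := Ideal.subset_span (Set.mem_insert _ _)
  have hgen2 : z ^ m ∈ I := Ideal.subset_span (by simp)
  have hxnI : x ^ n ∈ I := by
    obtain ⟨g, hg⟩ := sub_dvd_pow_sub_pow x (z ^ q) n
    have hxe : x ^ n = (x - z ^ q) * g + z ^ m * z ^ (q * n - m) := by
      have hzz : z ^ m * z ^ (q * n - m) = (z ^ q) ^ n := by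
        rw [← pow_add, Nat.add_sub_cancel' hmqn.le, ← pow_mul]
      rw [hzz]
      linear_combination hg
    rw [hxe]
    exact add_mem (Ideal.mul_mem_right _ _ hgen1) (Ideal.mul_mem_right _ _ hgen2)
  set J : Ideal R := Ideal.span {y, x ^ n} with hJ
  have hyJ : y ∈ J := Ideal.subset_span (Set.mem_insert _ _)
  have hxnJ : x ^ n ∈ J := Ideal.subset_span (by simp)
  apply le_antisymm
  · -- hard direction
    intro f hf
    rw [Submodule.mem_inf] at hf
    obtain ⟨hfI, hfJ⟩ := hf
    obtain ⟨a, b, hab⟩ := Ideal.mem_span_pair.mp hfJ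
    have haI : a ∈ I := by
      apply hyI
      have : y * a = f - b * x ^ n := by linear_combination hab
      rw [this]
      exact sub_mem hfI (Ideal.mul_mem_left _ _ hxnI)
    obtain ⟨u, v, huv⟩ := Ideal.mem_span_pair.mp haI
    have hfe : f = u * (y * (x - z ^ q)) + v * (y * z ^ m) + b * x ^ n := by
      linear_combination hab.symm + y * huv.symm
    rw [hfe]
    refine add_mem (add_mem ?_ ?_) ?_ <;>
      exact Ideal.mul_mem_left _ _ (Ideal.subset_span (by simp))
  · -- easy direction
    rw [Ideal.span_le]
    rintro r hr
    simp only [Set.mem_insert_iff, Set.mem_singleton_iff] at hr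
    rcases hr with rfl | rfl | rfl
    · exact ⟨Ideal.mul_mem_left _ _ hgen1, Ideal.mul_mem_right _ _ hyJ⟩
    · exact ⟨Ideal.mul_mem_left _ _ hgen2, Ideal.mul_mem_right _ _ hyJ⟩
    · exact ⟨hxnI, hxnJ⟩
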